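/- Let A be a unital Banach algebra and X a unit-linked Banach A-bimodule. Suppose θ ≥ 0, p < 1, f : A → X with f(0) = 0, and g : A → X with g(0) = g(1) = 0 satisfy max{‖f(λa + λb + c²) − λf(a) − λf(b) − c·f(c) − g(c)·c‖, ‖g(λab + λc) − λa·g(b) − λ·g(a)·b − λg(c)‖} ≤ θ(‖a‖^p + ‖b‖^p + ‖c‖^p) for all a,b,c ∈ A and all λ ∈ ℂ with |λ| = 1. Then there exists a unique generalized Jordan derivation d : A → X such that ‖f(a) − d(a)‖ ≤ θ‖a‖^p / (1 − 2^{p−1}) for all a ∈ A. -/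

import Mathlib

open Filter Topology MulOpposite

set_option linter.unusedSectionVars false
set_option linter.unusedVariables false
set_option maxHeartbeats 1000000

section

variable {A X : Type*}
  [NormedRing A] [NormedAlgebra ℂ A] [CompleteSpace A]
  [NormedAddCommGroup X] [NormedSpace ℂ X] [CompleteSpace X]
  [Module A X] [Module Aᵐᵒᵖ X]
  [IsBoundedSMul A X] [IsBoundedSMul Aᵐᵒᵖ X]
  [SMulCommClass A Aᵐᵒᵖ X]
  [IsScalarTower ℂ A X] [IsScalarTower ℂ Aᵐᵒᵖ X]

/-- A Jordan derivation from `A` into the bimodule `X`: a `ℂ`-linear map `δ` with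
`δ(a²) = a·δ(a) + δ(a)·a`. -/
def IsJordanDeriv (δ : A → X) : Prop :=
  (∀ x y : A, δ (x + y) = δ x + δ y) ∧ (∀ (μ : ℂ) (x : A), δ (μ • x) = μ • δ x) ∧
    ∀ a : A, δ (a ^ 2) = a • δ a + op a • δ a

/-- A generalized Jordan derivation: a `ℂ`-linear map `d` such that there is a Jordan
derivation `δ` with `d(a²) = a·d(a) + δ(a)·a`. -/
def IsGenJordanDeriv (d : A → X) : Prop :=
  (∀ x y : A, d (x + y) = d x + d y) ∧ (∀ (μ : ℂ) (x : A), d (μ • x) = μ • d x) ∧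
    ∃ δ : A → X, IsJordanDeriv δ ∧ ∀ a : A, d (a ^ 2) = a • d a + op a • δ a

private lemma gjd_r_pos (p : ℝ) : 0 < (2:ℝ)^(p-1) := Real.rpow_pos_of_pos two_pos _

private lemma gjd_r_lt_one {p : ℝ} (hp : p < 1) : (2:ℝ)^(p-1) < 1 :=
  Real.rpow_lt_one_of_one_lt_of_neg one_lt_two (by linarith)

private lemma gjd_norm_two_pow (n : ℕ) : ‖(2:ℂ)^n‖ = (2:ℝ)^n := by
  rw [norm_pow]; norm_num

private lemma gjd_norm_smul_pow (n : ℕ) (a : A) : ‖(2:ℂ)^n • a‖ = (2:ℝ)^n * ‖a‖ := by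
  rw [norm_smul, gjd_norm_two_pow]

private lemma gjd_rpow_pow (p : ℝ) (n : ℕ) : ((2:ℝ)^n) ^ p = ((2:ℝ)^p)^n := by
  rw [← Real.rpow_natCast 2 n, ← Real.rpow_natCast ((2:ℝ)^p) n,
    ← Real.rpow_mul (by norm_num), ← Real.rpow_mul (by norm_num), mul_comm]

private lemma gjd_norm_smul_pow_rpow (p : ℝ) (n : ℕ) (a : A) :
    ‖(2:ℂ)^n • a‖ ^ p = ((2:ℝ)^p)^n * ‖a‖^p := by
  rw [gjd_norm_smul_pow, Real.mul_rpow (by positivity) (norm_nonneg a), gjd_rpow_pow]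

private lemma gjd_r_eq (p : ℝ) : (2:ℝ)^(p-1) = (2:ℝ)^p / 2 := by
  rw [Real.rpow_sub two_pos, Real.rpow_one]

private lemma gjd_pgeom {r : ℝ} (h0 : 0 ≤ r) (h1 : r < 1) (n : ℕ) :
    ∑ i ∈ Finset.range n, r^i ≤ (1-r)⁻¹ := by
  have h2 : (0:ℝ) < 1 - r := by linarith
  rw [geom_sum_eq (by linarith : r ≠ 1) n]
  have h3 : (r ^ n - 1)/(r-1) = (1 - r^n)/(1-r) := by
    rw [← neg_sub 1 (r^n), ← neg_sub 1 r, neg_div_neg_eq]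
  rw [h3, inv_eq_one_div, div_le_div_iff₀ h2 h2]
  nlinarith [pow_nonneg h0 n]

private lemma gjd_tendsto_K_rho (K ρ : ℝ) (h0 : 0 ≤ ρ) (h1 : ρ < 1) :
    Tendsto (fun n : ℕ => K * ρ^n) atTop (𝓝 0) := by
  simpa using (tendsto_pow_atTop_nhds_zero_of_lt_one h0 h1).const_mul K

private lemma gjd_lim_eq {u v : ℕ → X} {L M : X} (hu : Tendsto u atTop (𝓝 L))
    (hv : Tendsto v atTop (𝓝 M)) {K ρ : ℝ} (hρ0 : 0 ≤ ρ) (hρ1 : ρ < 1)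
    (hb : ∀ n, ‖u n - v n‖ ≤ K * ρ ^ n) : L = M := by
  have h1 : Tendsto (fun n => u n - v n) atTop (𝓝 (L - M)) := hu.sub hv
  have h2 : Tendsto (fun n => u n - v n) atTop (𝓝 0) :=
    squeeze_zero_norm hb (gjd_tendsto_K_rho K ρ hρ0 hρ1)
  exact sub_eq_zero.mp (tendsto_nhds_unique h1 h2)

private lemma gjd_diff_bound (p : ℝ) (n : ℕ) (w : X) (c₁ c₂ : ℝ) (hc₁ : 0 ≤ c₁) (hc₂ : 0 ≤ c₂)
    (hw : ‖w‖ ≤ c₁ * ((2:ℝ)^p)^n + c₂) :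
    ‖((2:ℂ)^n)⁻¹ • w‖ ≤ (c₁ + c₂) * (max ((2:ℝ)^(p-1)) 2⁻¹)^n := by
  rw [norm_smul, norm_inv, gjd_norm_two_pow]
  set ρ := max ((2:ℝ)^(p-1)) 2⁻¹ with hρ
  have hρr : (2:ℝ)^(p-1) ≤ ρ := le_max_left _ _
  have hρh : (2:ℝ)⁻¹ ≤ ρ := le_max_right _ _
  have h2p : (0:ℝ) < (2:ℝ)^p := Real.rpow_pos_of_pos two_pos p
  have e1 : ((2:ℝ)^n)⁻¹ * (c₁ * ((2:ℝ)^p)^n) = c₁ * ((2:ℝ)^(p-1))^n := by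
    rw [gjd_r_eq p, div_pow]
    field_simp
  have e2 : ((2:ℝ)^n)⁻¹ * c₂ = c₂ * ((2:ℝ)⁻¹)^n := by
    rw [inv_pow]; ring
  have b1 : ((2:ℝ)^(p-1))^n ≤ ρ^n := pow_le_pow_left₀ (le_of_lt (gjd_r_pos p)) hρr n
  have b2 : ((2:ℝ)⁻¹)^n ≤ ρ^n := pow_le_pow_left₀ (by norm_num) hρh n
  calc ((2:ℝ)^n)⁻¹ * ‖w‖ ≤ ((2:ℝ)^n)⁻¹ * (c₁ * ((2:ℝ)^p)^n + c₂) :=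
        mul_le_mul_of_nonneg_left hw (by positivity)
    _ = c₁ * ((2:ℝ)^(p-1))^n + c₂ * ((2:ℝ)⁻¹)^n := by rw [mul_add, e1, e2]
    _ ≤ c₁ * ρ^n + c₂ * ρ^n :=
        add_le_add (mul_le_mul_of_nonneg_left b1 hc₁) (mul_le_mul_of_nonneg_left b2 hc₂)
    _ = (c₁ + c₂) * ρ^n := by ring

private lemma gjd_diff_bound4 (p : ℝ) (n : ℕ) (w : X) (c₁ c₂ : ℝ) (hc₁ : 0 ≤ c₁) (hc₂ : 0 ≤ c₂)
    (hw : ‖w‖ ≤ c₁ * ((2:ℝ)^p)^n + c₂) :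
    ‖((2:ℂ)^(2*n))⁻¹ • w‖ ≤ (c₁ + c₂) * (max ((2:ℝ)^(p-1)) 2⁻¹)^n := by
  rw [norm_smul, norm_inv, gjd_norm_two_pow]
  set ρ := max ((2:ℝ)^(p-1)) 2⁻¹ with hρ
  have hρr : (2:ℝ)^(p-1) ≤ ρ := le_max_left _ _
  have hρh : (2:ℝ)⁻¹ ≤ ρ := le_max_right _ _
  have h2p : (0:ℝ) < (2:ℝ)^p := Real.rpow_pos_of_pos two_pos p
  have e1 : ((2:ℝ)^(2*n))⁻¹ * (c₁ * ((2:ℝ)^p)^n) = c₁ * ((2:ℝ)^p/4)^n := by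
    rw [div_pow, two_mul, pow_add]
    have : ((4:ℝ))^n = 2^n * 2^n := by rw [show (4:ℝ) = 2*2 by norm_num, mul_pow]
    rw [this]
    field_simp
  have e2 : ((2:ℝ)^(2*n))⁻¹ * c₂ = c₂ * ((4:ℝ)⁻¹)^n := by
    rw [inv_pow, two_mul, pow_add]
    have : ((4:ℝ))^n = 2^n * 2^n := by rw [show (4:ℝ) = 2*2 by norm_num, mul_pow]
    rw [this]
    field_simp
  have b1 : ((2:ℝ)^p/4)^n ≤ ρ^n := by
    apply pow_le_pow_left₀ (by positivity)
    calc (2:ℝ)^p/4 ≤ (2:ℝ)^p/2 := by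
          apply div_le_div_of_nonneg_left h2p.le (by norm_num) (by norm_num)
      _ = (2:ℝ)^(p-1) := (gjd_r_eq p).symm
      _ ≤ ρ := hρr
  have b2 : ((4:ℝ)⁻¹)^n ≤ ρ^n := by
    apply pow_le_pow_left₀ (by norm_num)
    calc (4:ℝ)⁻¹ ≤ 2⁻¹ := by norm_num
      _ ≤ ρ := hρh
  calc ((2:ℝ)^(2*n))⁻¹ * ‖w‖ ≤ ((2:ℝ)^(2*n))⁻¹ * (c₁ * ((2:ℝ)^p)^n + c₂) :=
        mul_le_mul_of_nonneg_left hw (by positivity)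
    _ = c₁ * ((2:ℝ)^p/4)^n + c₂ * ((4:ℝ)⁻¹)^n := by rw [mul_add, e1, e2]
    _ ≤ c₁ * ρ^n + c₂ * ρ^n :=
        add_le_add (mul_le_mul_of_nonneg_left b1 hc₁) (mul_le_mul_of_nonneg_left b2 hc₂)
    _ = (c₁ + c₂) * ρ^n := by ring

/-- master construction: from an approximate doubling property, build the limit map. -/
private lemma gjd_construct (q : A → X) (θ1 θ2 p : ℝ) (hθ1 : 0 ≤ θ1) (hθ2 : 0 ≤ θ2) (hp : p < 1)
    (hstep : ∀ y : A, ‖q (y + y) - q y - q y‖ ≤ θ1 * ‖y‖ ^ p + θ2) :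
    ∃ Q : A → X,
      (∀ a : A, Tendsto (fun n => ((2:ℂ) ^ n)⁻¹ • q ((2:ℂ) ^ n • a)) atTop (𝓝 (Q a))) ∧
      (∀ a : A, ‖q a - Q a‖ ≤ (θ1/2) * ‖a‖ ^ p / (1 - (2:ℝ)^(p-1)) + θ2) := by
  set r : ℝ := (2:ℝ)^(p-1) with hrdef
  have hr0 : 0 < r := gjd_r_pos p
  have hr1 : r < 1 := gjd_r_lt_one hp
  set u : A → ℕ → X := fun a n => ((2:ℂ) ^ n)⁻¹ • q ((2:ℂ) ^ n • a) with hudef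
  have key : ∀ (a : A) (n : ℕ),
      ‖u a (n+1) - u a n‖ ≤ (θ1/2) * ‖a‖^p * r^n + (θ2/2) * (2⁻¹:ℝ)^n := by
    intro a n
    set y : A := (2:ℂ)^n • a with hy
    have h2n : ((2:ℂ)^(n+1)) • a = y + y := by
      rw [hy, ← two_smul ℂ ((2:ℂ)^n • a), smul_smul, ← pow_succ']
    have h2 : ((2:ℂ)^n)⁻¹ = ((2:ℂ)^(n+1))⁻¹ * 2 := by
      field_simp [pow_succ]
      ring
    have e1 : u a (n+1) - u a n = ((2:ℂ)^(n+1))⁻¹ • (q (y + y) - q y - q y) := by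
      have e2 : u a n = ((2:ℂ)^(n+1))⁻¹ • q y + ((2:ℂ)^(n+1))⁻¹ • q y := by
        show ((2:ℂ)^n)⁻¹ • q ((2:ℂ)^n • a) = _
        rw [← hy, h2, mul_smul, two_smul, smul_add]
      rw [e2]
      show ((2:ℂ)^(n+1))⁻¹ • q (((2:ℂ)^(n+1)) • a) - _ = _
      rw [h2n, smul_sub, smul_sub]
      abel
    rw [e1, norm_smul, norm_inv, gjd_norm_two_pow]
    have hb := hstep y
    have hyp : ‖y‖^p = ((2:ℝ)^p)^n * ‖a‖^p := gjd_norm_smul_pow_rpow p n a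
    rw [hyp] at hb
    have hle : ((2:ℝ)^(n+1))⁻¹ * ‖q (y+y) - q y - q y‖
        ≤ ((2:ℝ)^(n+1))⁻¹ * (θ1 * (((2:ℝ)^p)^n * ‖a‖^p) + θ2) :=
      mul_le_mul_of_nonneg_left hb (by positivity)
    refine hle.trans (le_of_eq ?_)
    have h2p : (0:ℝ) < (2:ℝ)^p := Real.rpow_pos_of_pos two_pos p
    rw [hrdef, gjd_r_eq p]
    rw [div_pow, pow_succ]
    field_simp
    ring_nf
    rw [one_div, inv_pow, mul_assoc θ2, inv_mul_cancel₀ (by positivity), mul_one]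
  have hcauchy : ∀ a : A, CauchySeq (u a) := by
    intro a
    set ρ : ℝ := max r 2⁻¹ with hρ
    have hρ1 : ρ < 1 := max_lt hr1 (by norm_num)
    apply cauchySeq_of_le_geometric ρ ((θ1/2) * ‖a‖^p + θ2/2) hρ1
    intro n
    rw [dist_eq_norm, norm_sub_rev]
    refine (key a n).trans ?_
    have e1 : r^n ≤ ρ^n := pow_le_pow_left₀ hr0.le (le_max_left _ _) n
    have e2 : ((2:ℝ)⁻¹)^n ≤ ρ^n := pow_le_pow_left₀ (by norm_num) (le_max_right _ _) n
    have hρ0 : (0:ℝ) ≤ ρ := le_max_of_le_right (by norm_num)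
    nlinarith [pow_nonneg hρ0 n, mul_le_mul_of_nonneg_left e1 (by positivity : (0:ℝ) ≤ (θ1/2) * ‖a‖^p),
      mul_le_mul_of_nonneg_left e2 (by positivity : (0:ℝ) ≤ θ2/2)]
  choose Q hQ using fun a => cauchySeq_tendsto_of_complete (hcauchy a)
  refine ⟨Q, hQ, ?_⟩
  intro a
  have hu0 : u a 0 = q a := by
    show ((2:ℂ)^0)⁻¹ • q ((2:ℂ)^0 • a) = q a
    simp
  have hsum : ∀ n : ℕ, ‖u a n - u a 0‖ ≤ (θ1/2) * ‖a‖ ^ p / (1 - r) + θ2 := by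
    intro n
    have h1 : dist (u a 0) (u a n) ≤ ∑ i ∈ Finset.range n, dist (u a i) (u a (i+1)) :=
      dist_le_range_sum_dist (u a) n
    have h2 : ∑ i ∈ Finset.range n, dist (u a i) (u a (i+1))
        ≤ ∑ i ∈ Finset.range n, ((θ1/2) * ‖a‖^p * r^i + (θ2/2) * (2⁻¹:ℝ)^i) := by
      apply Finset.sum_le_sum
      intro i _
      rw [dist_eq_norm, norm_sub_rev]
      exact key a i
    have h3 : ∑ i ∈ Finset.range n, ((θ1/2) * ‖a‖^p * r^i + (θ2/2) * (2⁻¹:ℝ)^i)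
        = ((θ1/2) * ‖a‖^p) * (∑ i ∈ Finset.range n, r^i)
          + (θ2/2) * (∑ i ∈ Finset.range n, ((2:ℝ)⁻¹)^i) := by
      rw [Finset.sum_add_distrib, Finset.mul_sum, Finset.mul_sum]
    have h4 : (∑ i ∈ Finset.range n, r^i) ≤ (1-r)⁻¹ := gjd_pgeom hr0.le hr1 n
    have h5 : (∑ i ∈ Finset.range n, ((2:ℝ)⁻¹)^i) ≤ (1-2⁻¹)⁻¹ :=
      gjd_pgeom (by norm_num) (by norm_num) n
    have h6 : ((1:ℝ)-2⁻¹)⁻¹ = 2 := by norm_num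
    rw [norm_sub_rev, ← dist_eq_norm]
    calc dist (u a 0) (u a n) ≤ _ := h1
      _ ≤ _ := h2
      _ = _ := h3
      _ ≤ ((θ1/2) * ‖a‖^p) * (1-r)⁻¹ + (θ2/2) * 2 := by
          have hc1 : (0:ℝ) ≤ (θ1/2) * ‖a‖^p := by positivity
          have hc2 : (0:ℝ) ≤ θ2/2 := by positivity
          rw [h6] at h5
          nlinarith [mul_le_mul_of_nonneg_left h4 hc1, mul_le_mul_of_nonneg_left h5 hc2]
      _ = (θ1/2) * ‖a‖ ^ p / (1 - r) + θ2 := by rw [div_eq_mul_inv]; ring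
  have hlim : Tendsto (fun n => ‖u a n - u a 0‖) atTop (𝓝 ‖Q a - u a 0‖) :=
    ((hQ a).sub_const (u a 0)).norm
  have hfin := le_of_tendsto hlim (Eventually.of_forall hsum)
  rw [hu0] at hfin
  rwa [norm_sub_rev]

private lemma gjd_full_hom (Q : A → X) (hadd : ∀ x y : A, Q (x + y) = Q x + Q y)
    (hcirc : ∀ (μ : ℂ), ‖μ‖ = 1 → ∀ x : A, Q (μ • x) = μ • Q x) :
    ∀ (μ : ℂ) (x : A), Q (μ • x) = μ • Q x := by
  have h0 : Q 0 = 0 := by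
    have h := hadd 0 0
    rw [add_zero] at h
    have : Q 0 + Q 0 = Q 0 + 0 := by rw [← h, add_zero]
    exact (add_left_cancel this)
  have hnat : ∀ (n : ℕ) (x : A), Q ((n:ℂ) • x) = (n:ℂ) • Q x := by
    intro n
    induction n with
    | zero => intro x; simp [h0]
    | succ k ih =>
      intro x
      have e1 : ((k+1:ℕ):ℂ) • x = (k:ℂ) • x + x := by
        push_cast
        rw [add_smul, one_smul]
      have e2 : ((k+1:ℕ):ℂ) • Q x = (k:ℂ) • Q x + Q x := by
        push_cast
        rw [add_smul, one_smul]
      rw [e1, hadd, ih, e2]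
  have hreal2 : ∀ (t : ℝ), |t| ≤ 2 → ∀ x : A, Q ((t:ℂ) • x) = (t:ℂ) • Q x := by
    intro t ht x
    have hsq : (t/2)^2 ≤ 1 := by
      have h1 := (abs_le.mp ht).1
      have h2 := (abs_le.mp ht).2
      nlinarith
    set s : ℝ := Real.sqrt (1 - (t/2)^2) with hs
    have hs2 : s^2 = 1 - (t/2)^2 := Real.sq_sqrt (by linarith)
    set z : ℂ := (↑(t/2) + ↑s * Complex.I) with hz
    have hre : z.re = t/2 := by simp [hz]
    have him : z.im = s := by simp [hz]
    have hnz : ‖z‖ = 1 := by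
      rw [Complex.norm_def, Complex.normSq_apply, hre, him]
      rw [show (t/2) * (t/2) + s * s = (t/2)^2 + s^2 by ring, hs2]
      simp
    have hncz : ‖(starRingEnd ℂ) z‖ = 1 := by rw [RCLike.norm_conj, hnz]
    have hzsum : z + (starRingEnd ℂ) z = (t:ℂ) := by
      rw [Complex.add_conj, hre]
      push_cast
      ring
    have e1 : (t:ℂ) • x = z • x + ((starRingEnd ℂ) z) • x := by
      rw [← add_smul, hzsum]
    rw [e1, hadd, hcirc z hnz, hcirc _ hncz, ← add_smul, hzsum]
  have hreal : ∀ (t : ℝ) (x : A), Q ((t:ℂ) • x) = (t:ℂ) • Q x := by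
    intro t x
    set n : ℕ := ⌊|t|⌋₊ + 1 with hn
    have hnpos : (0:ℝ) < n := by positivity
    have htn : |t / n| ≤ 2 := by
      rw [abs_div]
      have h1 : |t| < n := by
        have := Nat.lt_floor_add_one |t|
        push_cast [hn]
        push_cast at this
        linarith
      have habs : |(n:ℝ)| = (n:ℝ) := abs_of_pos hnpos
      rw [habs, div_le_iff₀ hnpos]
      linarith
    have e1 : (t:ℂ) • x = (n:ℂ) • (((t/n : ℝ):ℂ) • x) := by
      rw [smul_smul]
      congr 1
      have hne : ((⌊|t|⌋₊:ℂ) + 1) ≠ 0 := Nat.cast_add_one_ne_zero ⌊|t|⌋₊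
      push_cast
      field_simp
      exact (mul_div_cancel_right₀ _ (Nat.cast_ne_zero.mpr (Nat.succ_ne_zero _))).symm
    have e2 : (t:ℂ) • Q x = (n:ℂ) • (((t/n : ℝ):ℂ) • Q x) := by
      rw [smul_smul]
      congr 1
      have hne : ((⌊|t|⌋₊:ℂ) + 1) ≠ 0 := Nat.cast_add_one_ne_zero ⌊|t|⌋₊
      push_cast
      field_simp
      exact (mul_div_cancel_right₀ _ (Nat.cast_ne_zero.mpr (Nat.succ_ne_zero _))).symm
    rw [e1, hnat, hreal2 (t/n) htn, e2]
  intro μ x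
  have hμ : ((μ.re:ℝ):ℂ) + ((μ.im:ℝ):ℂ) * Complex.I = μ := Complex.re_add_im μ
  have e1 : μ • x = (μ.re:ℂ) • x + (μ.im:ℂ) • (Complex.I • x) := by
    rw [smul_smul, ← add_smul, hμ]
  have e2 : μ • Q x = (μ.re:ℂ) • Q x + (μ.im:ℂ) • (Complex.I • Q x) := by
    rw [smul_smul, ← add_smul, hμ]
  rw [e1, hadd, hreal, hreal, hcirc Complex.I Complex.norm_I, e2]

/-- square roots of elements close to 1 in a complete normed ring -/
private lemma gjd_sqrt (u : A) (hu : ‖u‖ ≤ 2⁻¹) : ∃ s : A, s^2 = 1 + u := by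
  set v : ℕ → A := fun n => Nat.rec (motive := fun _ => A) 0 (fun _ w => (2⁻¹:ℂ) • (u - w * w)) n
    with hvdef
  have hv0 : v 0 = 0 := rfl
  have hvs : ∀ n, v (n+1) = (2⁻¹:ℂ) • (u - v n * v n) := fun n => rfl
  have hnhalf : ‖(2⁻¹:ℂ)‖ = 2⁻¹ := by norm_num
  have hbd : ∀ n, ‖v n‖ ≤ 2⁻¹ := by
    intro n
    induction n with
    | zero => rw [hv0, norm_zero]; norm_num
    | succ k ih =>
      rw [hvs, norm_smul, hnhalf]
      have h1 : ‖u - v k * v k‖ ≤ ‖u‖ + ‖v k‖ * ‖v k‖ :=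
        (norm_sub_le _ _).trans (by gcongr; exact norm_mul_le _ _)
      have h2 : ‖v k‖ * ‖v k‖ ≤ 2⁻¹ * 2⁻¹ :=
        mul_le_mul ih ih (norm_nonneg _) (by norm_num)
      nlinarith [norm_nonneg (u - v k * v k)]
  have hdiff : ∀ n, ‖v (n+1) - v n‖ ≤ 2⁻¹ * (2⁻¹:ℝ)^n := by
    intro n
    induction n with
    | zero =>
      rw [hvs, hv0]
      simp only [mul_zero, sub_zero, pow_zero, mul_one]
      rw [norm_smul, hnhalf]
      nlinarith [norm_nonneg u]
    | succ k ih =>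
      have e1 : v (k+1+1) - v (k+1) = (2⁻¹:ℂ) • ((u - v (k+1) * v (k+1)) - (u - v k * v k)) := by
        rw [smul_sub, ← hvs (k+1), ← hvs k]
      have e2 : (u - v (k+1) * v (k+1)) - (u - v k * v k)
          = v k * (v k - v (k+1)) + (v k - v (k+1)) * v (k+1) := by noncomm_ring
      rw [e1, e2, norm_smul, hnhalf]
      have h1 : ‖v k * (v k - v (k+1)) + (v k - v (k+1)) * v (k+1)‖
          ≤ ‖v k‖ * ‖v k - v (k+1)‖ + ‖v k - v (k+1)‖ * ‖v (k+1)‖ :=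
        (norm_add_le _ _).trans (add_le_add (norm_mul_le _ _) (norm_mul_le _ _))
      have h2 : ‖v k - v (k+1)‖ ≤ 2⁻¹ * (2⁻¹:ℝ)^k := by rw [norm_sub_rev]; exact ih
      have h3 := hbd k
      have h4 := hbd (k+1)
      have h5 : (0:ℝ) ≤ ‖v k - v (k+1)‖ := norm_nonneg _
      have h6 : (0:ℝ) ≤ (2⁻¹:ℝ)^k := by positivity
      calc 2⁻¹ * ‖v k * (v k - v (k+1)) + (v k - v (k+1)) * v (k+1)‖
          ≤ 2⁻¹ * (‖v k‖ * ‖v k - v (k+1)‖ + ‖v k - v (k+1)‖ * ‖v (k+1)‖) := by linarith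
        _ ≤ 2⁻¹ * (2⁻¹ * (2⁻¹ * (2⁻¹:ℝ)^k) + (2⁻¹ * (2⁻¹:ℝ)^k) * 2⁻¹) := by
            apply mul_le_mul_of_nonneg_left _ (by norm_num)
            apply add_le_add
            · apply mul_le_mul h3 h2 h5 (by norm_num)
            · apply mul_le_mul h2 h4 (norm_nonneg _) (by positivity)
        _ ≤ 2⁻¹ * (2⁻¹:ℝ)^(k+1) := by
            rw [pow_succ]
            nlinarith
  have hcauchy : CauchySeq v := by
    apply cauchySeq_of_le_geometric 2⁻¹ 2⁻¹ (by norm_num)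
    intro n
    rw [dist_eq_norm, norm_sub_rev]
    exact hdiff n
  obtain ⟨L, hL⟩ := cauchySeq_tendsto_of_complete hcauchy
  have hL1 : Tendsto (fun n => v (n+1)) atTop (𝓝 L) := hL.comp (tendsto_add_atTop_nat 1)
  have hL2 : Tendsto (fun n => (2⁻¹:ℂ) • (u - v n * v n)) atTop (𝓝 ((2⁻¹:ℂ) • (u - L * L))) :=
    ((tendsto_const_nhds.sub (hL.mul hL)).const_smul _)
  have hfix : L = (2⁻¹:ℂ) • (u - L * L) := by
    refine tendsto_nhds_unique hL1 ?_
    simpa only [← hvs] using hL2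
  have h2L : L + L = u - L * L := by
    have := congrArg (fun w => (2:ℂ) • w) hfix
    simp only [smul_smul] at this
    norm_num at this
    rw [← two_smul ℂ L, this]
  refine ⟨1 + L, ?_⟩
  have : (1 + L)^2 = 1 + (L + L + L * L) := by noncomm_ring
  rw [this, h2L]
  abel

private lemma gjd_p0 (f g : A → X) (θ : ℝ) (hθ : 0 ≤ θ) (F G : A → X)
    (h0 : ∀ (a b c : A) (μ : ℂ), ‖μ‖ = 1 →
      max ‖f (μ • a + μ • b + c ^ 2) - μ • f a - μ • f b - c • f c - op c • g c‖
        ‖g (μ • (a * b) + μ • c) - μ • a • g b - μ • op b • g a - μ • g c‖ ≤ 3 * θ)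
    (hf0 : f 0 = 0) (hg0 : g 0 = 0) (hg1 : g 1 = 0)
    (hM : ∀ z : A, ‖f z - F z‖ ≤ 3*θ) (hMg : ∀ z : A, ‖g z - G z‖ ≤ 3*θ)
    (hFadd : ∀ x y : A, F (x+y) = F x + F y) (hFhom : ∀ (μ:ℂ) (x : A), F (μ•x) = μ • F x)
    (hGhom : ∀ (μ:ℂ) (x : A), G (μ•x) = μ • G x)
    (hFJordan : ∀ a : A, F (a^2) = a • F a + op a • G a)
    (hGJordan : ∀ a : A, G (a^2) = a • G a + op a • G a) :
    ∀ a : A, ‖f a - F a‖ ≤ 2*θ := by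
  -- G kills 1
  have hG1 : G 1 = 0 := by
    have h1 := hGJordan 1
    rw [one_pow, one_smul, op_one, one_smul] at h1
    have : G 1 + G 1 = G 1 + 0 := by rw [← h1, add_zero]
    exact add_left_cancel this
  -- g equals G exactly
  have hgG : ∀ b : A, g b = G b := by
    intro b
    have hbound : ∀ n : ℕ, ‖g ((n:ℂ) • b) - (n:ℂ) • g b - op b • g ((n:ℂ) • (1:A))‖ ≤ 3*θ := by
      intro n
      have h1 := le_trans (le_max_right _ _) (h0 ((n:ℂ) • (1:A)) b 0 1 (by norm_num))
      simp only [one_smul, smul_zero, add_zero, hg0, sub_zero] at h1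
      rw [smul_mul_assoc, one_mul, smul_assoc, one_smul] at h1
      exact h1
    have hid : ∀ n : ℕ, (n:ℂ) • (g b - G b)
        = (g ((n:ℂ) • b) - G ((n:ℂ) • b)) - op b • (g ((n:ℂ) • (1:A)) - G ((n:ℂ) • (1:A)))
          - (g ((n:ℂ) • b) - (n:ℂ) • g b - op b • g ((n:ℂ) • (1:A))) := by
      intro n
      rw [hGhom, hGhom, hG1, smul_zero, sub_zero, smul_sub]
      abel
    have hineq : ∀ n : ℕ, (n:ℝ) * ‖g b - G b‖ ≤ 6*θ + ‖op b‖ * (3*θ) := by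
      intro n
      have e1 : ‖(n:ℂ) • (g b - G b)‖ = (n:ℝ) * ‖g b - G b‖ := by
        rw [norm_smul, Complex.norm_natCast]
      rw [← e1, hid n]
      have n1 : ‖op b • (g ((n:ℂ) • (1:A)) - G ((n:ℂ) • (1:A)))‖ ≤ ‖op b‖ * (3*θ) :=
        (norm_smul_le _ _).trans (mul_le_mul_of_nonneg_left (hMg _) (norm_nonneg _))
      calc ‖_ - _ - _‖ ≤ ‖_ - _‖ + ‖_‖ := norm_sub_le _ _
        _ ≤ (‖g ((n:ℂ) • b) - G ((n:ℂ) • b)‖ + ‖op b • (g ((n:ℂ) • (1:A)) - G ((n:ℂ) • (1:A)))‖)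
            + ‖g ((n:ℂ) • b) - (n:ℂ) • g b - op b • g ((n:ℂ) • (1:A))‖ := by
            gcongr
            exact norm_sub_le _ _
        _ ≤ (3*θ + ‖op b‖ * (3*θ)) + 3*θ := by
            have := hMg ((n:ℂ) • b)
            have := hbound n
            gcongr <;> assumption
        _ = 6*θ + ‖op b‖ * (3*θ) := by ring
    have hle : ‖g b - G b‖ ≤ 0 := by
      refine ge_of_tendsto (tendsto_const_div_atTop_nhds_zero_nat (6*θ + ‖op b‖ * (3*θ))) ?_
      refine eventually_atTop.mpr ⟨1, fun n hn => ?_⟩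
      have hnp : (0:ℝ) < n := by exact_mod_cast hn
      rw [le_div_iff₀ hnp, mul_comm]
      exact hineq n
    have := norm_le_zero_iff.mp hle
    exact sub_eq_zero.mp this
  -- decay of f - F along the scalar line
  have hdecay : ∀ ζ : ℂ, 1 ≤ ‖ζ‖ → ‖f (ζ • (1:A)) - F (ζ • (1:A))‖ ≤ 6*θ/‖ζ‖ := by
    intro ζ hζ
    have hζ0 : (0:ℝ) < ‖ζ‖ := lt_of_lt_of_le one_pos hζ
    set c : A := ζ • (1:A) with hc
    have hsq := le_trans (le_max_left _ _) (h0 0 0 c 1 (by norm_num))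
    simp only [one_smul, smul_zero, zero_add, hf0, sub_zero] at hsq
    -- hsq : ‖f (c^2) - c • f c - op c • g c‖ ≤ 3θ
    have hcf : c • f c = ζ • f c := by rw [hc, smul_assoc, one_smul]
    have hcg : op c • g c = ζ • G c := by
      rw [hc, op_smul, op_one, smul_assoc, one_smul, hgG]
    rw [hcf, hcg] at hsq
    have hFJ : F (c^2) = ζ • F c + ζ • G c := by
      rw [hFJordan c, hc, op_smul, op_one]
      rw [smul_assoc, one_smul, smul_assoc, one_smul]
    have hid2 : ζ • (f c - F c) = (f (c^2) - F (c^2)) - (f (c^2) - ζ • f c - ζ • G c) := by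
      rw [hFJ, smul_sub]
      abel
    have e1 : ‖ζ‖ * ‖f c - F c‖ = ‖ζ • (f c - F c)‖ := (norm_smul _ _).symm
    rw [le_div_iff₀ hζ0, mul_comm]
    calc ‖ζ‖ * ‖f c - F c‖ = ‖ζ • (f c - F c)‖ := e1
      _ = ‖(f (c^2) - F (c^2)) - (f (c^2) - ζ • f c - ζ • G c)‖ := by rw [hid2]
      _ ≤ ‖f (c^2) - F (c^2)‖ + ‖f (c^2) - ζ • f c - ζ • G c‖ := norm_sub_le _ _
      _ ≤ 3*θ + 3*θ := add_le_add (hM _) hsq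
      _ = 6*θ := by ring
  -- main induction
  have main : ∀ (n : ℕ) (K : ℝ), 1 ≤ K → ∀ y : A,
      ‖f y - F y‖ ≤ 2*θ + 2*θ/K + (4⁻¹:ℝ)^n * (3*θ) := by
    intro n
    induction n with
    | zero =>
      intro K hK y
      have h1 : (0:ℝ) < K := lt_of_lt_of_le one_pos hK
      have h2 : (0:ℝ) ≤ 2*θ/K := by positivity
      have := hM y
      simp only [pow_zero, one_mul]
      linarith
    | succ n ih =>
      intro K hK y
      have hK0 : (0:ℝ) < K := lt_of_lt_of_le one_pos hK
      set τ : ℝ := max K (4*‖y‖+1) with hτdef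
      have hτK : K ≤ τ := le_max_left _ _
      have hτy : 4*‖y‖+1 ≤ τ := le_max_right _ _
      have hτpos : (0:ℝ) < τ := lt_of_lt_of_le hK0 hτK
      have hτ1 : (1:ℝ) ≤ τ := le_trans hK hτK
      set u : A := ((2/τ : ℝ):ℂ) • y with hu
      have hun : ‖u‖ ≤ 2⁻¹ := by
        rw [hu, norm_smul, Complex.norm_real, Real.norm_eq_abs,
          abs_of_pos (div_pos two_pos hτpos), div_mul_eq_mul_div, div_le_iff₀ hτpos]
        nlinarith [norm_nonneg y]
      obtain ⟨s, hs⟩ := gjd_sqrt u hun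
      set T : ℂ := ((τ:ℝ):ℂ) with hT
      set z : ℂ := Complex.I * ((Real.sqrt τ : ℝ):ℂ) with hz
      have hz2 : z^2 = -T := by
        have hss : (Real.sqrt τ)^2 = τ := Real.sq_sqrt hτpos.le
        rw [hz, mul_pow, Complex.I_sq, hT,
          show ((Real.sqrt τ : ℝ):ℂ)^2 = ((Real.sqrt τ ^ 2 : ℝ) : ℂ) by push_cast; ring, hss]
        ring
      set c : A := z • s with hc
      have hτne : ((τ:ℝ):ℂ) ≠ 0 := Complex.ofReal_ne_zero.mpr (ne_of_gt hτpos)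
      have hc2 : c^2 = (-T) • (1:A) + (-2:ℂ) • y := by
        have hTz : -T * ((2/τ : ℝ):ℂ) = (-2:ℂ) := by
          rw [hT]; push_cast; field_simp
        rw [hc, smul_pow, hs, hz2, smul_add, hu, smul_smul, hTz]
      have h2y : (-2:ℂ) • y = -(y + y) := by
        rw [show ((-2:ℂ)) = -(2:ℂ) by norm_num, neg_smul, two_smul]
      have h4y : (4:ℂ) • y = y + y + y + y := by
        rw [show (4:ℂ) = 2 + 2 by norm_num, add_smul, two_smul]; abel
      have h4Fy : (4:ℂ) • F y = F y + F y + F y + F y := by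
        rw [show (4:ℂ) = 2 + 2 by norm_num, add_smul, two_smul]; abel
      have h4fy : (4:ℂ) • f y = f y + f y + f y + f y := by
        rw [show (4:ℂ) = 2 + 2 by norm_num, add_smul, two_smul]; abel
      -- the two key instances
      have hA := le_trans (le_max_left _ _) (h0 y y c 1 (by norm_num))
      have hB := le_trans (le_max_left _ _) (h0 y y c (-1) (by simp))
      simp only [one_smul] at hA
      simp only [neg_smul, one_smul, sub_neg_eq_add] at hB
      -- rewrite the arguments
      have hP1 : y + y + c^2 = (-T) • (1:A) := by
        rw [hc2, h2y]; abel
      have hP2 : -y + -y + c^2 = (-T) • (1:A) - (4:ℂ) • y := by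
        rw [hc2, h2y, h4y]; abel
      rw [hP1] at hA
      rw [hP2] at hB
      -- F values
      have hFsub : ∀ x w : A, F (x - w) = F x - F w := by
        intro x w
        rw [sub_eq_add_neg, hFadd, show (-w) = (-1:ℂ) • w from (neg_one_smul ℂ w).symm,
          hFhom, neg_one_smul, ← sub_eq_add_neg]
      have hFP2 : F ((-T) • (1:A) - (4:ℂ) • y) = (-T) • F 1 - (4:ℂ) • F y := by
        rw [hFsub, hFhom, hFhom]
      have hFP1 : F ((-T) • (1:A)) = (-T) • F 1 := hFhom _ _
      -- the key identity
      have hkey : (4:ℂ) • (f y - F y)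
          = (f ((-T) • (1:A)) - F ((-T) • (1:A)))
            - (f ((-T) • (1:A) - (4:ℂ) • y) - F ((-T) • (1:A) - (4:ℂ) • y))
            - (f ((-T) • (1:A)) - f y - f y - c • f c - op c • g c)
            + (f ((-T) • (1:A) - (4:ℂ) • y) + f y + f y - c • f c - op c • g c) := by
        rw [hFP1, hFP2, smul_sub, h4fy, h4Fy]
        abel
      -- norms
      have hdec : ‖f ((-T) • (1:A)) - F ((-T) • (1:A))‖ ≤ 6*θ/τ := by
        have hnT : ‖(-T : ℂ)‖ = τ := by
          rw [norm_neg, hT, Complex.norm_real, Real.norm_eq_abs, abs_of_pos hτpos]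
        have := hdecay (-T) (by rw [hnT]; exact hτ1)
        rwa [hnT] at this
      have hih : ‖f ((-T) • (1:A) - (4:ℂ) • y) - F ((-T) • (1:A) - (4:ℂ) • y)‖
          ≤ 2*θ + 2*θ/K + (4⁻¹:ℝ)^n * (3*θ) := ih K hK _
      have hnorm4 : ‖(4:ℂ) • (f y - F y)‖ = 4 * ‖f y - F y‖ := by
        rw [norm_smul]; norm_num
      have htot : 4 * ‖f y - F y‖
          ≤ 6*θ/τ + (2*θ + 2*θ/K + (4⁻¹:ℝ)^n * (3*θ)) + 3*θ + 3*θ := by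
        rw [← hnorm4, hkey]
        calc ‖_ - _ - _ + _‖
            ≤ ‖_ - _ - _‖ + ‖f ((-T) • (1:A) - (4:ℂ) • y) + f y + f y - c • f c - op c • g c‖ :=
              norm_add_le _ _
          _ ≤ (‖_ - _‖ + ‖f ((-T) • (1:A)) - f y - f y - c • f c - op c • g c‖)
              + ‖f ((-T) • (1:A) - (4:ℂ) • y) + f y + f y - c • f c - op c • g c‖ := by
              gcongr
              exact norm_sub_le _ _
          _ ≤ ((‖f ((-T) • (1:A)) - F ((-T) • (1:A))‖
                + ‖f ((-T) • (1:A) - (4:ℂ) • y) - F ((-T) • (1:A) - (4:ℂ) • y)‖)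
                + ‖f ((-T) • (1:A)) - f y - f y - c • f c - op c • g c‖)
              + ‖f ((-T) • (1:A) - (4:ℂ) • y) + f y + f y - c • f c - op c • g c‖ := by
              gcongr
              exact norm_sub_le _ _
          _ ≤ (6*θ/τ + (2*θ + 2*θ/K + (4⁻¹:ℝ)^n * (3*θ)) + 3*θ) + 3*θ := by
              gcongr
          _ = 6*θ/τ + (2*θ + 2*θ/K + (4⁻¹:ℝ)^n * (3*θ)) + 3*θ + 3*θ := by ring
      have hτdiv : 6*θ/τ ≤ 6*θ/K := by
        apply div_le_div_of_nonneg_left (by linarith) hK0 hτK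
      have hpow : ((4:ℝ)⁻¹)^(n+1) * (3*θ) = ((4⁻¹:ℝ)^n * (3*θ))/4 := by
        rw [pow_succ]; ring
      rw [hpow]
      calc ‖f y - F y‖
          ≤ (6*θ/K + (2*θ + 2*θ/K + (4⁻¹:ℝ)^n * (3*θ)) + 3*θ + 3*θ)/4 := by linarith
        _ = 2*θ + 2*θ/K + ((4⁻¹:ℝ)^n * (3*θ))/4 := by ring
  -- conclusion
  intro a
  have step1 : ∀ K : ℝ, 1 ≤ K → ‖f a - F a‖ ≤ 2*θ + 2*θ/K := by
    intro K hK
    have hlim : Tendsto (fun n : ℕ => 2*θ + 2*θ/K + (4⁻¹:ℝ)^n * (3*θ)) atTop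
        (𝓝 (2*θ + 2*θ/K)) := by
      have h1 : Tendsto (fun n : ℕ => (4⁻¹:ℝ)^n * (3*θ)) atTop (𝓝 0) := by
        simpa using (tendsto_pow_atTop_nhds_zero_of_lt_one (by norm_num : (0:ℝ) ≤ 4⁻¹)
          (by norm_num)).mul_const (3*θ)
      simpa using tendsto_const_nhds.add h1
    exact ge_of_tendsto hlim (Eventually.of_forall (fun n => main n K hK a))
  have hlim2 : Tendsto (fun n : ℕ => 2*θ + 2*θ/(n:ℝ)) atTop (𝓝 (2*θ)) := by
    simpa using tendsto_const_nhds.add (tendsto_const_div_atTop_nhds_zero_nat (2*θ))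
  refine ge_of_tendsto hlim2 ?_
  refine eventually_atTop.mpr ⟨1, fun n hn => ?_⟩
  exact step1 n (by exact_mod_cast hn)

theorem stmt (f g : A → X) (θ p : ℝ) (hθ : 0 ≤ θ) (hp : p < 1)
    (hf0 : f 0 = 0) (hg0 : g 0 = 0) (hg1 : g 1 = 0)
    (h : ∀ (a b c : A) (μ : ℂ), ‖μ‖ = 1 →
      max ‖f (μ • a + μ • b + c ^ 2) - μ • f a - μ • f b - c • f c - op c • g c‖
        ‖g (μ • (a * b) + μ • c) - μ • a • g b - μ • op b • g a - μ • g c‖ ≤ θ * (‖a‖ ^ p + ‖b‖ ^ p + ‖c‖ ^ p)) :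
    ∃! d : A → X, IsGenJordanDeriv d ∧
      ∀ a : A, ‖f a - d a‖ ≤ θ * ‖a‖ ^ p / (1 - (2 : ℝ) ^ (p - 1)) := by
  classical
  set r : ℝ := (2:ℝ)^(p-1) with hrdef
  have hr0 : 0 < r := gjd_r_pos p
  have hr1 : r < 1 := gjd_r_lt_one hp
  set ρ : ℝ := max r 2⁻¹ with hρdef
  have hρ0 : (0:ℝ) ≤ ρ := le_max_of_le_right (by norm_num)
  have hρ1 : ρ < 1 := max_lt hr1 (by norm_num)
  have hrp : ∀ a : A, (0:ℝ) ≤ ‖a‖^p := fun a => Real.rpow_nonneg (norm_nonneg a) p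
  -- clean versions of the hypothesis
  have hf_add : ∀ x y : A, ‖f (x + y) - f x - f y‖ ≤ θ * (‖x‖^p + ‖y‖^p + ‖(0:A)‖^p) := by
    intro x y
    have h1 := le_trans (le_max_left _ _) (h x y 0 1 (by norm_num))
    simpa only [one_smul, ne_eq, OfNat.ofNat_ne_zero, not_false_eq_true, zero_pow, add_zero,
      zero_smul, op_zero, sub_zero] using h1
  have hf_hom : ∀ (μ : ℂ), ‖μ‖ = 1 → ∀ x : A,
      ‖f (μ • x) - μ • f x‖ ≤ θ * (‖x‖^p + ‖(0:A)‖^p + ‖(0:A)‖^p) := by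
    intro μ hμ x
    have h1 := le_trans (le_max_left _ _) (h x 0 0 μ hμ)
    simpa only [smul_zero, ne_eq, OfNat.ofNat_ne_zero, not_false_eq_true, zero_pow, add_zero,
      hf0, zero_smul, op_zero, sub_zero] using h1
  have hf_sq : ∀ c : A, ‖f (c^2) - c • f c - op c • g c‖
      ≤ θ * (‖(0:A)‖^p + ‖(0:A)‖^p + ‖c‖^p) := by
    intro c
    have h1 := le_trans (le_max_left _ _) (h 0 0 c 1 (by norm_num))
    simpa only [one_smul, smul_zero, zero_add, hf0, sub_zero] using h1
  have hg_add : ∀ x y : A, ‖g (x + y) - g x - g y‖ ≤ θ * (‖(1:A)‖^p + ‖x‖^p + ‖y‖^p) := by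
    intro x y
    have h1 := le_trans (le_max_right _ _) (h 1 x y 1 (by norm_num))
    simpa only [one_smul, one_mul, hg1, smul_zero, sub_zero] using h1
  have hg_hom : ∀ (μ : ℂ), ‖μ‖ = 1 → ∀ x : A,
      ‖g (μ • x) - μ • g x‖ ≤ θ * (‖(0:A)‖^p + ‖(0:A)‖^p + ‖x‖^p) := by
    intro μ hμ x
    have h1 := le_trans (le_max_right _ _) (h 0 0 x μ hμ)
    simpa only [zero_mul, mul_zero, smul_zero, zero_add, hg0, zero_smul, op_zero,
      sub_zero] using h1
  have hg_sq : ∀ y : A, ‖g (y^2) - y • g y - op y • g y‖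
      ≤ θ * (‖y‖^p + ‖y‖^p + ‖(0:A)‖^p) := by
    intro y
    have h1 := le_trans (le_max_right _ _) (h y y 0 1 (by norm_num))
    simp only [one_smul, smul_zero, add_zero, hg0, sub_zero] at h1
    rw [← pow_two] at h1
    exact h1
  -- construct the limits F and G
  have hZnn : (0:ℝ) ≤ θ * ‖(0:A)‖^p := mul_nonneg hθ (hrp 0)
  have hOnn : (0:ℝ) ≤ θ * ‖(1:A)‖^p := mul_nonneg hθ (hrp 1)
  obtain ⟨F, hFt, hFb0⟩ := gjd_construct f (2*θ) (θ * ‖(0:A)‖^p) p (by linarith) hZnn hp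
    (fun y => by
      have := hf_add y y
      calc ‖f (y+y) - f y - f y‖ ≤ θ * (‖y‖^p + ‖y‖^p + ‖(0:A)‖^p) := this
        _ = 2*θ*‖y‖^p + θ * ‖(0:A)‖^p := by ring)
  obtain ⟨G, hGt, hGb0⟩ := gjd_construct g (2*θ) (θ * ‖(1:A)‖^p) p (by linarith) hOnn hp
    (fun y => by
      have := hg_add y y
      calc ‖g (y+y) - g y - g y‖ ≤ θ * (‖(1:A)‖^p + ‖y‖^p + ‖y‖^p) := this
        _ = 2*θ*‖y‖^p + θ * ‖(1:A)‖^p := by ring)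
  -- additivity of F and G
  have hFadd : ∀ x y : A, F (x + y) = F x + F y := by
    intro x y
    refine gjd_lim_eq (hFt (x+y)) ((hFt x).add (hFt y)) hρ0 hρ1
      (K := θ*(‖x‖^p + ‖y‖^p) + θ*‖(0:A)‖^p) (fun n => ?_)
    have e1 : ((2:ℂ)^n)⁻¹ • f ((2:ℂ)^n • (x+y))
        - (((2:ℂ)^n)⁻¹ • f ((2:ℂ)^n • x) + ((2:ℂ)^n)⁻¹ • f ((2:ℂ)^n • y))
        = ((2:ℂ)^n)⁻¹ • (f ((2:ℂ)^n • x + (2:ℂ)^n • y) - f ((2:ℂ)^n • x) - f ((2:ℂ)^n • y)) := by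
      rw [smul_add ((2:ℂ)^n) x y, smul_sub, smul_sub]
      abel
    show ‖_ - _‖ ≤ _
    rw [e1]
    apply gjd_diff_bound p n _ _ _ (by positivity) hZnn
    have hb := hf_add ((2:ℂ)^n • x) ((2:ℂ)^n • y)
    rw [gjd_norm_smul_pow_rpow, gjd_norm_smul_pow_rpow] at hb
    calc _ ≤ _ := hb
      _ = θ*(‖x‖^p + ‖y‖^p) * ((2:ℝ)^p)^n + θ*‖(0:A)‖^p := by ring
  have hGadd : ∀ x y : A, G (x + y) = G x + G y := by
    intro x y
    refine gjd_lim_eq (hGt (x+y)) ((hGt x).add (hGt y)) hρ0 hρ1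
      (K := θ*(‖x‖^p + ‖y‖^p) + θ*‖(1:A)‖^p) (fun n => ?_)
    have e1 : ((2:ℂ)^n)⁻¹ • g ((2:ℂ)^n • (x+y))
        - (((2:ℂ)^n)⁻¹ • g ((2:ℂ)^n • x) + ((2:ℂ)^n)⁻¹ • g ((2:ℂ)^n • y))
        = ((2:ℂ)^n)⁻¹ • (g ((2:ℂ)^n • x + (2:ℂ)^n • y) - g ((2:ℂ)^n • x) - g ((2:ℂ)^n • y)) := by
      rw [smul_add ((2:ℂ)^n) x y, smul_sub, smul_sub]
      abel
    show ‖_ - _‖ ≤ _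
    rw [e1]
    apply gjd_diff_bound p n _ _ _ (by positivity) hOnn
    have hb := hg_add ((2:ℂ)^n • x) ((2:ℂ)^n • y)
    rw [gjd_norm_smul_pow_rpow, gjd_norm_smul_pow_rpow] at hb
    calc _ ≤ _ := hb
      _ = θ*(‖x‖^p + ‖y‖^p) * ((2:ℝ)^p)^n + θ*‖(1:A)‖^p := by ring
  -- circle homogeneity of F and G
  have hFcirc : ∀ (μ : ℂ), ‖μ‖ = 1 → ∀ x : A, F (μ • x) = μ • F x := by
    intro μ hμ x
    refine gjd_lim_eq (hFt (μ • x)) ((hFt x).const_smul μ) hρ0 hρ1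
      (K := θ*‖x‖^p + 2*θ*‖(0:A)‖^p) (fun n => ?_)
    have e1 : ((2:ℂ)^n)⁻¹ • f ((2:ℂ)^n • (μ • x)) - μ • (((2:ℂ)^n)⁻¹ • f ((2:ℂ)^n • x))
        = ((2:ℂ)^n)⁻¹ • (f (μ • ((2:ℂ)^n • x)) - μ • f ((2:ℂ)^n • x)) := by
      rw [smul_comm ((2:ℂ)^n) μ x, smul_sub, smul_comm μ (((2:ℂ)^n)⁻¹) (f ((2:ℂ)^n • x))]
    show ‖_ - _‖ ≤ _
    rw [e1]
    apply gjd_diff_bound p n _ _ _ (mul_nonneg hθ (hrp x)) (by linarith [hZnn])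
    have hb := hf_hom μ hμ ((2:ℂ)^n • x)
    rw [gjd_norm_smul_pow_rpow] at hb
    calc _ ≤ _ := hb
      _ = θ*‖x‖^p * ((2:ℝ)^p)^n + 2*θ*‖(0:A)‖^p := by ring
  have hGcirc : ∀ (μ : ℂ), ‖μ‖ = 1 → ∀ x : A, G (μ • x) = μ • G x := by
    intro μ hμ x
    refine gjd_lim_eq (hGt (μ • x)) ((hGt x).const_smul μ) hρ0 hρ1
      (K := θ*‖x‖^p + 2*θ*‖(0:A)‖^p) (fun n => ?_)
    have e1 : ((2:ℂ)^n)⁻¹ • g ((2:ℂ)^n • (μ • x)) - μ • (((2:ℂ)^n)⁻¹ • g ((2:ℂ)^n • x))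
        = ((2:ℂ)^n)⁻¹ • (g (μ • ((2:ℂ)^n • x)) - μ • g ((2:ℂ)^n • x)) := by
      rw [smul_comm ((2:ℂ)^n) μ x, smul_sub, smul_comm μ (((2:ℂ)^n)⁻¹) (g ((2:ℂ)^n • x))]
    show ‖_ - _‖ ≤ _
    rw [e1]
    apply gjd_diff_bound p n _ _ _ (mul_nonneg hθ (hrp x)) (by linarith [hZnn])
    have hb := hg_hom μ hμ ((2:ℂ)^n • x)
    rw [gjd_norm_smul_pow_rpow] at hb
    calc _ ≤ _ := hb
      _ = θ*‖x‖^p * ((2:ℝ)^p)^n + 2*θ*‖(0:A)‖^p := by ring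
  -- the doubled-index subsequence tool
  have htwo : Tendsto (fun n : ℕ => 2*n) atTop atTop := by
    apply tendsto_atTop_atTop_of_monotone (fun a b hab => by omega)
    intro b; exact ⟨b, by omega⟩
  have hinv2 : ∀ n : ℕ, ((2:ℂ)^(2*n))⁻¹ * (2:ℂ)^n = ((2:ℂ)^n)⁻¹ := by
    intro n
    have hne : ((2:ℂ)^n) ≠ 0 := pow_ne_zero n two_ne_zero
    rw [two_mul, pow_add]
    field_simp
  -- Jordan property of G
  have hGJordan : ∀ a : A, G (a^2) = a • G a + op a • G a := by
    intro c
    have hu : Tendsto (fun n => ((2:ℂ)^(2*n))⁻¹ • g ((2:ℂ)^(2*n) • c^2)) atTop (𝓝 (G (c^2))) :=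
      (hGt (c^2)).comp htwo
    have hv : Tendsto (fun n => c • (((2:ℂ)^n)⁻¹ • g ((2:ℂ)^n • c))
        + op c • (((2:ℂ)^n)⁻¹ • g ((2:ℂ)^n • c))) atTop (𝓝 (c • G c + op c • G c)) :=
      ((hGt c).const_smul c).add ((hGt c).const_smul (op c))
    refine gjd_lim_eq hu hv hρ0 hρ1 (K := 2*θ*‖c‖^p + θ*‖(0:A)‖^p) (fun n => ?_)
    set Y : A := (2:ℂ)^n • c with hY
    have hY2 : (2:ℂ)^(2*n) • c^2 = Y^2 := by
      rw [hY, smul_pow, ← pow_mul']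
    have hterm : ∀ v : X, ((2:ℂ)^(2*n))⁻¹ • ((2:ℂ)^n • v) = ((2:ℂ)^n)⁻¹ • v := by
      intro v
      rw [smul_smul, hinv2]
    have h1 : ((2:ℂ)^(2*n))⁻¹ • (Y • g Y) = c • (((2:ℂ)^n)⁻¹ • g Y) := by
      rw [hY, smul_assoc ((2:ℂ)^n) c (g Y), hterm, smul_comm]
    have h2 : ((2:ℂ)^(2*n))⁻¹ • (op Y • g Y) = op c • (((2:ℂ)^n)⁻¹ • g Y) := by
      rw [hY, op_smul, smul_assoc ((2:ℂ)^n) (op c) (g Y), hterm, smul_comm]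
    have e1 : ((2:ℂ)^(2*n))⁻¹ • g ((2:ℂ)^(2*n) • c^2)
        - (c • (((2:ℂ)^n)⁻¹ • g ((2:ℂ)^n • c)) + op c • (((2:ℂ)^n)⁻¹ • g ((2:ℂ)^n • c)))
        = ((2:ℂ)^(2*n))⁻¹ • (g (Y^2) - Y • g Y - op Y • g Y) := by
      rw [hY2, smul_sub, smul_sub, h1, h2, ← hY]
      abel
    show ‖_ - _‖ ≤ _
    rw [e1]
    apply gjd_diff_bound4 p n _ _ _ (by positivity) hZnn
    have hb := hg_sq Y
    rw [hY, gjd_norm_smul_pow_rpow] at hb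
    calc _ ≤ _ := hb
      _ = 2*θ*‖c‖^p * ((2:ℝ)^p)^n + θ*‖(0:A)‖^p := by ring
  -- generalized Jordan property of F
  have hFJordan : ∀ a : A, F (a^2) = a • F a + op a • G a := by
    intro c
    have hu : Tendsto (fun n => ((2:ℂ)^(2*n))⁻¹ • f ((2:ℂ)^(2*n) • c^2)) atTop (𝓝 (F (c^2))) :=
      (hFt (c^2)).comp htwo
    have hv : Tendsto (fun n => c • (((2:ℂ)^n)⁻¹ • f ((2:ℂ)^n • c))
        + op c • (((2:ℂ)^n)⁻¹ • g ((2:ℂ)^n • c))) atTop (𝓝 (c • F c + op c • G c)) :=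
      ((hFt c).const_smul c).add ((hGt c).const_smul (op c))
    refine gjd_lim_eq hu hv hρ0 hρ1 (K := θ*‖c‖^p + 2*θ*‖(0:A)‖^p) (fun n => ?_)
    set Y : A := (2:ℂ)^n • c with hY
    have hY2 : (2:ℂ)^(2*n) • c^2 = Y^2 := by
      rw [hY, smul_pow, ← pow_mul']
    have hterm : ∀ v : X, ((2:ℂ)^(2*n))⁻¹ • ((2:ℂ)^n • v) = ((2:ℂ)^n)⁻¹ • v := by
      intro v
      rw [smul_smul, hinv2]
    have h1 : ((2:ℂ)^(2*n))⁻¹ • (Y • f Y) = c • (((2:ℂ)^n)⁻¹ • f Y) := by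
      rw [hY, smul_assoc ((2:ℂ)^n) c (f Y), hterm, smul_comm]
    have h2 : ((2:ℂ)^(2*n))⁻¹ • (op Y • g Y) = op c • (((2:ℂ)^n)⁻¹ • g Y) := by
      rw [hY, op_smul, smul_assoc ((2:ℂ)^n) (op c) (g Y), hterm, smul_comm]
    have e1 : ((2:ℂ)^(2*n))⁻¹ • f ((2:ℂ)^(2*n) • c^2)
        - (c • (((2:ℂ)^n)⁻¹ • f ((2:ℂ)^n • c)) + op c • (((2:ℂ)^n)⁻¹ • g ((2:ℂ)^n • c)))
        = ((2:ℂ)^(2*n))⁻¹ • (f (Y^2) - Y • f Y - op Y • g Y) := by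
      rw [hY2, smul_sub, smul_sub, h1, h2, ← hY]
      abel
    show ‖_ - _‖ ≤ _
    rw [e1]
    apply gjd_diff_bound4 p n _ _ _ (mul_nonneg hθ (hrp c)) (by linarith [hZnn])
    have hb := hf_sq Y
    rw [hY, gjd_norm_smul_pow_rpow] at hb
    calc _ ≤ _ := hb
      _ = θ*‖c‖^p * ((2:ℝ)^p)^n + 2*θ*‖(0:A)‖^p := by ring
  -- full ℂ-homogeneity
  have hFhom : ∀ (μ : ℂ) (x : A), F (μ • x) = μ • F x := gjd_full_hom F hFadd hFcirc
  have hGhom : ∀ (μ : ℂ) (x : A), G (μ • x) = μ • G x := gjd_full_hom G hGadd hGcirc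
  -- the norm bound
  have hFb : ∀ a : A, ‖f a - F a‖ ≤ θ * ‖a‖^p / (1 - (2:ℝ)^(p-1)) := by
    rcases eq_or_ne p 0 with hp0 | hp0
    · -- p = 0 : all instance bounds equal 3θ and we use the quadrupling gadget
      have hhalf : (2:ℝ)^((0:ℝ)-1) = 2⁻¹ := by
        rw [zero_sub, Real.rpow_neg (by norm_num : (0:ℝ) ≤ 2), Real.rpow_one]
      have h3 : ∀ (a b c : A) (μ : ℂ), ‖μ‖ = 1 →
          max ‖f (μ • a + μ • b + c ^ 2) - μ • f a - μ • f b - c • f c - op c • g c‖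
            ‖g (μ • (a * b) + μ • c) - μ • a • g b - μ • op b • g a - μ • g c‖ ≤ 3 * θ := by
        intro a b c μ hμ
        have hh := h a b c μ hμ
        rw [hp0, Real.rpow_zero, Real.rpow_zero, Real.rpow_zero] at hh
        exact le_of_le_of_eq hh (by ring)
      have hM : ∀ z : A, ‖f z - F z‖ ≤ 3*θ := by
        intro z
        have hb := hFb0 z
        rw [hp0, Real.rpow_zero, Real.rpow_zero, hhalf] at hb
        refine hb.trans (le_of_eq ?_)
        ring
      have hMg : ∀ z : A, ‖g z - G z‖ ≤ 3*θ := by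
        intro z
        have hb := hGb0 z
        rw [hp0, Real.rpow_zero, Real.rpow_zero, hhalf] at hb
        refine hb.trans (le_of_eq ?_)
        ring
      have hfin := gjd_p0 f g θ hθ F G h3 hf0 hg0 hg1 hM hMg hFadd hFhom hGhom hFJordan hGJordan
      intro a
      rw [hp0, Real.rpow_zero, hhalf]
      refine (hfin a).trans (le_of_eq ?_)
      ring
    · intro a
      have hb := hFb0 a
      have hZ : ‖(0:A)‖^p = 0 := by rw [norm_zero]; exact Real.zero_rpow hp0
      rw [hZ, mul_zero, add_zero] at hb
      calc ‖f a - F a‖ ≤ (2*θ/2) * ‖a‖^p / (1 - (2:ℝ)^(p-1)) := hb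
        _ = θ * ‖a‖^p / (1 - (2:ℝ)^(p-1)) := by ring_nf
  -- assemble
  refine ⟨F, ⟨⟨hFadd, hFhom, G, ⟨hGadd, hGhom, hGJordan⟩, hFJordan⟩, hFb⟩, ?_⟩
  rintro d' ⟨⟨hd'add, hd'hom, -⟩, hd'b⟩
  funext a
  have key : ∀ n : ℕ, ‖d' a - F a‖ ≤ (2*θ*‖a‖^p/(1-r)) * ρ^n := by
    intro n
    have hne : ((2:ℂ)^n) ≠ 0 := pow_ne_zero n two_ne_zero
    set Y : A := (2:ℂ)^n • a with hY
    have hYa : ((2:ℂ)^n)⁻¹ • Y = a := by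
      rw [hY, smul_smul, inv_mul_cancel₀ hne, one_smul]
    have e1 : d' a - F a = ((2:ℂ)^n)⁻¹ • (d' Y - F Y) := by
      rw [smul_sub]
      rw [show d' a = ((2:ℂ)^n)⁻¹ • d' Y by rw [← hd'hom, hYa],
        show F a = ((2:ℂ)^n)⁻¹ • F Y by rw [← hFhom, hYa]]
    rw [e1]
    have hsplit : ‖d' Y - F Y‖ ≤ ‖f Y - d' Y‖ + ‖f Y - F Y‖ := by
      have : d' Y - F Y = (f Y - F Y) - (f Y - d' Y) := by abel
      rw [this]
      calc ‖(f Y - F Y) - (f Y - d' Y)‖ ≤ ‖f Y - F Y‖ + ‖f Y - d' Y‖ := norm_sub_le _ _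
        _ = ‖f Y - d' Y‖ + ‖f Y - F Y‖ := by ring
    have hbb : ‖d' Y - F Y‖ ≤ 2 * (θ * ‖Y‖^p / (1-r)) := by
      have b1 := hd'b Y
      have b2 := hFb Y
      rw [← hrdef] at b2
      linarith
    rw [norm_smul, norm_inv, gjd_norm_two_pow]
    have hYp : ‖Y‖^p = ((2:ℝ)^p)^n * ‖a‖^p := by
      rw [hY]; exact gjd_norm_smul_pow_rpow p n a
    rw [hYp] at hbb
    have h1r : (0:ℝ) < 1 - r := by linarith
    have step1 : ((2:ℝ)^n)⁻¹ * ‖d' Y - F Y‖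
        ≤ ((2:ℝ)^n)⁻¹ * (2 * (θ * (((2:ℝ)^p)^n * ‖a‖^p) / (1-r))) :=
      mul_le_mul_of_nonneg_left hbb (by positivity)
    refine step1.trans ?_
    have e2 : ((2:ℝ)^n)⁻¹ * (2 * (θ * (((2:ℝ)^p)^n * ‖a‖^p) / (1-r)))
        = (2*θ*‖a‖^p/(1-r)) * r^n := by
      rw [hrdef, gjd_r_eq p, div_pow]
      field_simp
    rw [e2]
    have : r^n ≤ ρ^n := pow_le_pow_left₀ hr0.le (le_max_left _ _) n
    apply mul_le_mul_of_nonneg_left this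
    positivity
  have hz : ‖d' a - F a‖ ≤ 0 :=
    ge_of_tendsto (gjd_tendsto_K_rho _ ρ hρ0 hρ1) (Eventually.of_forall key)
  have : d' a - F a = 0 := by
    have := norm_le_zero_iff.mp hz
    exact this
  exact sub_eq_zero.mp this

end
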